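/- The function g_s(ν) = √π · 2^{1−2ν}/Γ(ν + 1/2) is strictly decreasing on the interval [1/2, 1], with g_s(1/2) = √π and g_s(1) = 1. -/

import Mathlib

open Real Set

private lemma gs_h_convex :
    ConvexOn ℝ (Ioi (-(1/2) : ℝ))
      (fun ν : ℝ => Real.log (Real.Gamma (ν + 1/2)) + (2*ν - 1) * Real.log 2) := by
  refine ConvexOn.add ?_ ?_
  · have := Real.convexOn_log_Gamma.comp_affineMap
      (AffineMap.id ℝ ℝ + AffineMap.const ℝ ℝ (1/2 : ℝ))
    convert this using 1
    all_goals try rfl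
    · ext x
      simp only [mem_preimage, AffineMap.coe_add, AffineMap.coe_id, AffineMap.coe_const,
        Pi.add_apply, id_eq, Function.const_apply, mem_Ioi]
      exact ⟨fun hx => by linarith, fun hx => by linarith⟩
  · have hlin : ConvexOn ℝ (Ioi (-(1/2) : ℝ)) (fun x : ℝ => (2 * Real.log 2) • x) :=
      (convexOn_id (convex_Ioi _)).smul (by positivity)
    have := hlin.add_const (-(Real.log 2))
    convert this using 1
    ext x
    simp [smul_eq_mul]
    ring

theorem gs_strictAnti (gs : ℝ → ℝ)
    (hgs : ∀ ν : ℝ, gs ν = Real.sqrt π * 2 ^ (1 - 2 * ν) / Real.Gamma (ν + 1 / 2)) :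
    StrictAntiOn gs (Icc (1 / 2 : ℝ) 1) ∧ gs (1 / 2) = Real.sqrt π ∧ gs 1 = 1 := by
  set h : ℝ → ℝ := fun ν => Real.log (Real.Gamma (ν + 1/2)) + (2*ν - 1) * Real.log 2 with hh
  have hsqrtpi_pos : (0:ℝ) < Real.sqrt π := Real.sqrt_pos.mpr pi_pos
  -- h 0 < h (1/2)
  have h0 : h 0 < h (1/2) := by
    have e0 : h 0 = Real.log (Real.sqrt π) - Real.log 2 := by
      simp only [hh]
      rw [show (0:ℝ) + 1/2 = 1/2 by norm_num, Real.Gamma_one_half_eq]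
      ring
    have e1 : h (1/2) = 0 := by
      norm_num [hh, Real.Gamma_one]
    rw [e0, e1, sub_neg]
    exact Real.log_lt_log hsqrtpi_pos ((Real.sqrt_lt' two_pos).mpr (by nlinarith [pi_lt_d2]))
  have hmono : StrictMonoOn h (Ioi (-(1/2) : ℝ) ∩ Ici (1/2 : ℝ)) :=
    gs_h_convex.strictMonoOn (by norm_num) (by norm_num) h0
  -- rewrite gs
  have key : ∀ x : ℝ, 1/2 ≤ x → gs x = Real.sqrt π / Real.exp (h x) := by
    intro x hx
    have hG : 0 < Real.Gamma (x + 1/2) := Real.Gamma_pos_of_pos (by linarith)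
    have hexp : Real.exp (h x) = Real.Gamma (x + 1/2) * (2:ℝ) ^ (2*x - 1) := by
      rw [hh]
      rw [Real.exp_add, Real.exp_log hG, Real.rpow_def_of_pos two_pos, mul_comm (Real.log 2)]
    rw [hgs x, hexp]
    have h2 : ((2:ℝ) ^ (1 - 2*x)) = ((2:ℝ) ^ (2*x - 1))⁻¹ := by
      rw [← Real.rpow_neg (by norm_num)]
      ring_nf
    rw [h2]
    field_simp
  refine ⟨?_, ?_, ?_⟩
  · intro a ha b hb hab
    rw [key a ha.1, key b hb.1]
    have : h a < h b := hmono ⟨by norm_num; linarith [ha.1], ha.1⟩ ⟨by norm_num; linarith [hb.1], hb.1⟩ hab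
    exact div_lt_div_of_pos_left hsqrtpi_pos (Real.exp_pos _) (Real.exp_lt_exp.mpr this)
  · rw [hgs]
    norm_num [Real.Gamma_one]
  · rw [hgs]
    have hG : Real.Gamma (1 + 1/2 : ℝ) = Real.sqrt π / 2 := by
      rw [show (1 + 1/2 : ℝ) = 1/2 + 1 by ring, Real.Gamma_add_one (by norm_num),
        Real.Gamma_one_half_eq]
      ring
    rw [hG]
    rw [show (1 - 2 * 1 : ℝ) = -1 by ring, Real.rpow_neg_one]
    field_simp
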